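/- Let r ∈ [1, 2] and set q(r) = 4/(4r − r²). Then: (i) for every Pigou instance G_P(a, n) and every WCC equilibrium x ∈ [0, n] of G_P(a, n) with uncertainty r, SC(x) ≤ q(r)·min_{y∈[0,n]} SC(y); and (ii) there exist a > 0, n > 0 and a WCC equilibrium x of G_P(a, n) with uncertainty r such that SC(x) = q(r)·min_{y∈[0,n]} SC(y). In particular, the worst-case price of anarchy over Pigou instances for WCC players with uncertainty r ∈ [1,2] equals 4/(4r − r²). -/

import Mathlib

/-- Social cost in the Pigou instance `G_P(a,n)`: a mass `x ∈ [0,n]` uses resource 2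
(with cost `c₂(t) = a·t`) and a mass `n − x` uses resource 1 (with `c₁(t) = 1`), so
`SC(x) = (n − x) + a·x²`. -/
noncomputable def pigouSC (a n x : ℝ) : ℝ := (n - x) + a * x ^ 2

/-- Worst-case regret of resource 1 in `G_P(a,n)` under uncertainty `r`. -/
noncomputable def pigouWCR1 (a r x : ℝ) : ℝ := 1 - a * x / r

/-- Worst-case regret of resource 2 in `G_P(a,n)` under uncertainty `r`. -/
noncomputable def pigouWCR2 (a r x : ℝ) : ℝ := a * r * x - 1

/-- `x ∈ [0,n]` is a WCR equilibrium of `G_P(a,n)` with uncertainty `r` iff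
`(x < n → WCR₁(x) ≤ WCR₂(x))` and `(x > 0 → WCR₂(x) ≤ WCR₁(x))`. -/
def PigouWCREq (a n r x : ℝ) : Prop :=
  (x < n → pigouWCR1 a r x ≤ pigouWCR2 a r x) ∧
  (0 < x → pigouWCR2 a r x ≤ pigouWCR1 a r x)

/-- `x ∈ [0,n]` is a WCC equilibrium of `G_P(a,n)` with uncertainty `r` iff
`(x > 0 → a·r·x ≤ 1)` and `(x < n → a·r·x ≥ 1)`. -/
def PigouWCCEq (a n r x : ℝ) : Prop :=
  (0 < x → a * r * x ≤ 1) ∧ (x < n → 1 ≤ a * r * x)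

/-- For `r ∈ [1,2]` and `q(r) = 4/(4r − r²)`:
(i) every WCC equilibrium of every Pigou instance has social cost at most `q(r)` times the
optimal social cost; (ii) this bound is tight for some Pigou instance and WCC equilibrium.
Hence the worst-case PoA over Pigou instances for WCC players with uncertainty `r ∈ [1,2]`
equals `4/(4r − r²)`. -/
theorem stmt_9 (r : ℝ) (hr1 : 1 ≤ r) (hr2 : r ≤ 2) :
    (∀ a n x : ℝ, 0 < a → 0 < n → x ∈ Set.Icc 0 n → PigouWCCEq a n r x →
      ∀ y ∈ Set.Icc (0 : ℝ) n,
        pigouSC a n x ≤ 4 / (4 * r - r ^ 2) * pigouSC a n y) ∧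
    (∃ a n x : ℝ, 0 < a ∧ 0 < n ∧ x ∈ Set.Icc 0 n ∧ PigouWCCEq a n r x ∧
      ∃ y ∈ Set.Icc (0 : ℝ) n, (∀ z ∈ Set.Icc (0 : ℝ) n, pigouSC a n y ≤ pigouSC a n z) ∧
        pigouSC a n x = 4 / (4 * r - r ^ 2) * pigouSC a n y) := by
  have hr0 : (0:ℝ) < r := by linarith
  have hD : (0:ℝ) < 4 * r - r ^ 2 := by nlinarith
  constructor
  · intro a n x ha hn hx hEq y hy
    obtain ⟨hx0, hxn⟩ := hx
    obtain ⟨hy0, hyn⟩ := hy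
    obtain ⟨hE1, hE2⟩ := hEq
    have hxpos : 0 < x := by
      rcases lt_or_eq_of_le hx0 with h | h
      · exact h
      · exfalso
        have := hE2 (by rw [← h]; exact hn)
        rw [← h] at this
        simp at this
        linarith
    have h1 : a * r * x ≤ 1 := hE1 hxpos
    rw [div_mul_eq_mul_div, le_div_iff₀ hD]
    unfold pigouSC
    rcases lt_or_eq_of_le hxn with hlt | heq
    · -- interior case: a r x = 1
      have h2 : 1 ≤ a * r * x := hE2 hlt
      have harx : a * r * x = 1 := le_antisymm h1 h2
      nlinarith [sq_nonneg (2 * a * y - 1), mul_nonneg ha.le (sq_nonneg (2 * a * y - 1)),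
        mul_nonneg (sub_nonneg.2 hxn) (sq_nonneg (2 - r)), sq_nonneg (2 - r),
        mul_pos ha hxpos, mul_nonneg ha.le hy0]
    · -- boundary case: x = n
      subst heq
      rcases le_or_gt (2 * a * x) 1 with hsm | hlg
      · nlinarith [mul_nonneg (sub_nonneg.2 hyn) (sub_nonneg.2 hsm),
          mul_nonneg (mul_nonneg ha.le (sq_nonneg x)) (sq_nonneg (2 - r)),
          mul_nonneg (sub_nonneg.2 hyn) (mul_nonneg ha.le (sub_nonneg.2 hyn)),
          mul_nonneg hy0 (sub_nonneg.2 hyn)]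
      · have hkey : 0 ≤ (1 - a * r * x) * ((4 - r) * (a * x) - 1) := by
          apply mul_nonneg (by linarith)
          nlinarith
        nlinarith [sq_nonneg (2 * a * y - 1), mul_nonneg ha.le (sq_nonneg (2 * a * y - 1)),
          hkey]
  · refine ⟨1, 1 / r, 1 / r, one_pos, by positivity, ⟨by positivity, le_refl _⟩,
      ⟨?_, ?_⟩, 1 / 2, ⟨by norm_num, ?_⟩, ?_, ?_⟩
    · intro _
      rw [one_mul, mul_one_div, div_self hr0.ne']
    · intro h
      exact absurd h (lt_irrefl _)
    · rw [div_le_div_iff₀ (by norm_num) hr0]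
      linarith
    · intro z hz
      unfold pigouSC
      nlinarith [sq_nonneg (z - 1 / 2)]
    · unfold pigouSC
      have h4 : (4:ℝ) - r ≠ 0 := (by linarith : (0:ℝ) < 4 - r).ne'
      field_simp
      ring
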